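/- Let a ≥ 3 be a positive integer, h ≥ 1, d ≥ 1 integers, with gcd(a, d) = 1. Set b = h*a + d and c = h*a + 2*d, and K = h*⌊(a-1)/2⌋. Then the Frobenius number satisfies g(a, b, c) = a*b - a*(K+1) - b, i.e., a*b - a*(K+1) - b is not representable as a nonnegative integer combination of a, b, c, while every larger integer is. -/

import Mathlib

theorem stmt_18 (a h d : ℕ) (ha : 3 ≤ a) (hh : 1 ≤ h) (hd : 1 ≤ d)
    (hgcd : Nat.gcd a d = 1) :
    IsGreatest {n : ℕ | ¬ ∃ x y z : ℕ,
        n = a * x + (h * a + d) * y + (h * a + 2 * d) * z}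
      (a * (h * a + d) - a * (h * ((a - 1) / 2) + 1) - (h * a + d)) := by
  have ha1 : 1 < a := by omega
  set q := (a - 1) / 2 with hq
  set r := a - 1 - (a - 1) / 2 with hr
  have harq : a = q + r + 1 := by omega
  have Hgen : ∀ q' r' : ℕ, a = q' + r' + 1 →
      a * (h * a + d) + a = a * (h * q' + 1) + (h * a * r' + d * (a - 1)) + (h * a + d) := by
    intro q' r' hq'
    subst hq'
    simp only [Nat.add_sub_cancel]
    ring
  have H := Hgen q r harq
  have hr1 : 1 ≤ r := by omega
  have hMa : a ≤ h * a * r + d * (a - 1) := by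
    calc a = 1 * a * 1 := by ring
    _ ≤ h * a * r := Nat.mul_le_mul (Nat.mul_le_mul hh le_rfl) hr1
    _ ≤ h * a * r + d * (a - 1) := Nat.le_add_right _ _
  have hVM : a * (h * a + d) - a * (h * q + 1) - (h * a + d) + a
      = h * a * r + d * (a - 1) := by
    have key : ∀ AB AK M B : ℕ, AB + a = AK + M + B → a ≤ M →
        AB - AK - B + a = M := by intro AB AK M B h1 h2; omega
    exact key _ _ _ _ H hMa
  set V := a * (h * a + d) - a * (h * q + 1) - (h * a + d) with hVdef
  constructor
  · -- V is not representable
    simp only [Set.mem_setOf_eq]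
    rintro ⟨x, y, z, heq⟩
    have e1 : (h * a + d) * y + (h * a + 2 * d) * z
        = a * (h * (y + z)) + d * (y + 2 * z) := by ring
    have e2 : a * (x + 1 + h * (y + z)) = a * x + a + a * (h * (y + z)) := by ring
    have heq2 : h * a * r + d * (a - 1)
        = a * (x + 1 + h * (y + z)) + d * (y + 2 * z) := by
      have kk : ∀ M' V' BC AHY DY A2 X : ℕ, V' + a = M' → V' = X + BC →
          BC = AHY + DY → A2 = X + a + AHY → M' = A2 + DY := by
        intros; omega
      have heq' : V = a * x + ((h * a + d) * y + (h * a + 2 * d) * z) := by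
        rw [heq, Nat.add_assoc]
      exact kk _ V _ _ _ _ _ hVM heq' e1 e2
    have l1 : h * a * r + d * (a - 1) = d * (a - 1) + a * (h * r) := by ring
    have hmod : d * (y + 2 * z) % a = d * (a - 1) % a := by
      calc d * (y + 2 * z) % a
          = (d * (y + 2 * z) + a * (x + 1 + h * (y + z))) % a :=
            (Nat.add_mul_mod_self_left _ _ _).symm
        _ = (a * (x + 1 + h * (y + z)) + d * (y + 2 * z)) % a := by
            rw [Nat.add_comm]
        _ = (h * a * r + d * (a - 1)) % a := by rw [heq2]
        _ = (d * (a - 1) + a * (h * r)) % a := by rw [l1]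
        _ = d * (a - 1) % a := Nat.add_mul_mod_self_left _ _ _
    have htmod : (y + 2 * z) % a = (a - 1) % a :=
      Nat.ModEq.cancel_left_of_coprime hgcd hmod
    rw [Nat.mod_eq_of_lt (by omega : a - 1 < a)] at htmod
    have ht : a - 1 ≤ y + 2 * z :=
      le_of_eq_of_le htmod.symm (Nat.mod_le _ _)
    have hyz : r ≤ y + z := by omega
    have i1 : h * a * r ≤ h * a * (y + z) := Nat.mul_le_mul_left _ hyz
    have i2 : d * (a - 1) ≤ d * (y + 2 * z) := Nat.mul_le_mul_left _ ht
    have e3 : a * (x + 1 + h * (y + z)) = a * x + a + h * a * (y + z) := by ring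
    have contra : ∀ R Dm AA PP DD X : ℕ, R + Dm = AA + DD → AA = X + a + PP →
        R ≤ PP → Dm ≤ DD → False := by
      intros; omega
    exact contra _ _ _ _ _ _ heq2 e3 i1 i2
  · -- V is an upper bound
    intro n hn
    simp only [Set.mem_setOf_eq] at hn
    by_contra hc
    push_neg at hc
    apply hn
    have hco : Nat.Coprime d a := Nat.coprime_comm.mp hgcd
    obtain ⟨e, -, he⟩ := Nat.exists_mul_mod_eq_one_of_coprime hco ha1
    set t := (e * n) % a with htdef
    have ht_lt : t < a := Nat.mod_lt _ (by omega)
    have hdtn : d * t ≡ n [MOD a] := by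
      have h1 : d * t ≡ d * (e * n) [MOD a] := (Nat.mod_modEq (e * n) a).mul_left d
      have h5 : d * (e * n) ≡ n [MOD a] := by
        have h3 : d * e ≡ 1 [MOD a] := by
          show d * e % a = 1 % a
          rw [Nat.mod_eq_of_lt ha1]; exact he
        have h4 : d * e * n ≡ 1 * n [MOD a] := h3.mul_right n
        calc d * (e * n) = d * e * n := by ring
          _ ≡ 1 * n [MOD a] := h4
          _ = n := by ring
      exact h1.trans h5
    have hu2v : t % 2 + 2 * (t / 2) = t := by omega
    have huvr : t % 2 + t / 2 ≤ r := by omega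
    have key2 : ∀ u v : ℕ, (h * a + d) * u + (h * a + 2 * d) * v
        = a * (h * (u + v)) + d * (u + 2 * v) := by intros; ring
    set W := (h * a + d) * (t % 2) + (h * a + 2 * d) * (t / 2) with hW
    have hWe : W = a * (h * (t % 2 + t / 2)) + d * t := by
      calc W = a * (h * (t % 2 + t / 2)) + d * (t % 2 + 2 * (t / 2)) := key2 _ _
        _ = a * (h * (t % 2 + t / 2)) + d * t := by rw [hu2v]
    clear_value W
    have hWM : W ≤ h * a * r + d * (a - 1) := by
      rw [hWe]
      have j1 : a * (h * (t % 2 + t / 2)) ≤ h * a * r := by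
        have e4 : a * (h * (t % 2 + t / 2)) = h * a * (t % 2 + t / 2) := by ring
        rw [e4]; exact Nat.mul_le_mul_left _ huvr
      have j2 : d * t ≤ d * (a - 1) := Nat.mul_le_mul_left _ (by omega)
      exact Nat.add_le_add j1 j2
    have hWVa : W ≤ V + a := le_of_le_of_eq hWM hVM.symm
    have hWn : W ≡ n [MOD a] := by
      have : W % a = d * t % a := by
        rw [hWe]
        calc (a * (h * (t % 2 + t / 2)) + d * t) % a
            = (d * t + a * (h * (t % 2 + t / 2))) % a := by rw [Nat.add_comm]
          _ = d * t % a := Nat.add_mul_mod_self_left _ _ _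
      exact (this.trans hdtn : _)
    have hWle : W ≤ n := by
      rcases le_or_gt W n with hle | hlt
      · exact hle
      · exfalso
        have hdvd : a ∣ W - n := (Nat.modEq_iff_dvd' hlt.le).mp hWn.symm
        obtain ⟨k, hk⟩ := hdvd
        rcases Nat.eq_zero_or_pos k with rfl | hk1
        · simp at hk; omega
        · have haWn : a ≤ W - n := hk ▸ Nat.le_mul_of_pos_right a hk1
          omega
    obtain ⟨x, hx⟩ := (Nat.modEq_iff_dvd' hWle).mp hWn
    refine ⟨x, t % 2, t / 2, ?_⟩
    calc n = n - W + W := (Nat.sub_add_cancel hWle).symm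
      _ = a * x + W := by rw [hx]
      _ = a * x + (h * a + d) * (t % 2) + (h * a + 2 * d) * (t / 2) := by
          rw [hW]; ring
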